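/- arXiv:1701.01590 — 3 statements merged into one kernel-verified Lean document; each statement's English description precedes it below -/
import Mathlib

section
/- Suppose h1 ≠ 0, h2 ≠ 0 and h3 ≠ 0. Then the Gaussian observation channel is non-manipulable: every Markov kernel κ from ℝ to ℝ satisfying (μ_x.bind κ).bind G = μ_x.bind G for every x ∈ ℝ must satisfy κ(u) = δ_u (the Dirac measure at u) for Lebesgue-almost every u ∈ ℝ. -/
open MeasureTheory ProbabilityTheory
open scoped ENNReal NNReal

/-- Bayes posterior weight of source symbol `+1` given direct observation `x`. -/
noncomputable def mixWeight (h3 x : ℝ) : ℝ :=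
  Real.exp (-(x - h3) ^ 2 / 2) /
    (Real.exp (-(x - h3) ^ 2 / 2) + Real.exp (-(x + h3) ^ 2 / 2))

/-- Conditional law of the relay's observation given direct observation `x`:
`μ_x = w(x) • N(h1,1) + (1 - w(x)) • N(-h1,1)`. -/
noncomputable def muX (h1 h3 x : ℝ) : Measure ℝ :=
  ENNReal.ofReal (mixWeight h3 x) • gaussianReal h1 1
    + ENNReal.ofReal (1 - mixWeight h3 x) • gaussianReal (-h1) 1

/-- Relay-to-destination Gaussian channel `G(v) = N(h2 ⬝ v, 1)`. -/
noncomputable def Gchan (h2 : ℝ) : ℝ → Measure ℝ := fun v => gaussianReal (h2 * v) 1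

namespace NonManipAux

open Real
open scoped ENNReal NNReal


lemma meas_expline (s : ℝ) : Measurable fun x : ℝ => ENNReal.ofReal (Real.exp (s * x)) :=
  (Real.continuous_exp.comp (continuous_const.mul continuous_id)).measurable.ennreal_ofReal

lemma gauss_mgf (m s : ℝ) :
    ∫⁻ x, ENNReal.ofReal (Real.exp (s * x)) ∂(gaussianReal m 1) =
      ENNReal.ofReal (Real.exp (s * m + s ^ 2 / 2)) := by
  rw [gaussianReal_of_var_ne_zero _ one_ne_zero,
    lintegral_withDensity_eq_lintegral_mul _ (measurable_gaussianPDF _ _) (meas_expline s)]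
  have : ∀ x, (gaussianPDF m 1 * fun x => ENNReal.ofReal (Real.exp (s * x))) x
      = ENNReal.ofReal (Real.exp (s * m + s ^ 2 / 2)) * gaussianPDF (m + s) 1 x := by
    intro x
    simp only [Pi.mul_apply, gaussianPDF, ← ENNReal.ofReal_mul (gaussianPDFReal_nonneg _ _ _),
      ← ENNReal.ofReal_mul (Real.exp_nonneg _)]
    congr 1
    simp only [gaussianPDFReal, NNReal.coe_one, mul_one]
    rw [mul_comm, show ∀ c a b : ℝ, Real.exp a * (c * Real.exp b) = c * Real.exp (a + b) from
      fun c a b => by rw [Real.exp_add]; ring,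
      show ∀ c a b : ℝ, Real.exp a * (c * Real.exp b) = c * Real.exp (a + b) from
      fun c a b => by rw [Real.exp_add]; ring]
    congr 1
    ring
  simp_rw [this]
  rw [lintegral_const_mul _ (measurable_gaussianPDF _ _),
    lintegral_gaussianPDF_eq_one _ one_ne_zero, mul_one]

lemma gauss_withDensity (h1 : ℝ) :
    gaussianReal h1 1 =
      (gaussianReal (-h1) 1).withDensity (fun u => ENNReal.ofReal (Real.exp (2 * h1 * u))) := by
  rw [gaussianReal_of_var_ne_zero _ one_ne_zero, gaussianReal_of_var_ne_zero _ one_ne_zero,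
    ← withDensity_mul _ (measurable_gaussianPDF _ _) (meas_expline (2 * h1))]
  congr 1
  funext u
  simp only [Pi.mul_apply, gaussianPDF, ← ENNReal.ofReal_mul (gaussianPDFReal_nonneg _ _ _)]
  congr 1
  simp only [gaussianPDFReal, NNReal.coe_one, mul_one]
  rw [mul_assoc, ← Real.exp_add]
  congr 1
  ring

lemma measurable_gaussFamily : Measurable (fun m : ℝ => gaussianReal m 1) := by
  apply Measure.measurable_of_measurable_coe
  intro s hs
  simp_rw [gaussianReal_apply _ one_ne_zero s]
  have hm : Measurable (fun p : ℝ × ℝ => gaussianPDF p.1 1 p.2) := by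
    have : Continuous (fun p : ℝ × ℝ => gaussianPDFReal p.1 1 p.2) := by
      simp only [gaussianPDFReal, NNReal.coe_one, mul_one]
      fun_prop
    exact this.measurable.ennreal_ofReal
  exact hm.lintegral_prod_right'

lemma bind_smul_add (a b : ℝ≥0∞) (μ μ' : Measure ℝ) {f : ℝ → Measure ℝ} (hf : Measurable f) :
    (a • μ + b • μ').bind f = a • μ.bind f + b • μ'.bind f := by
  ext s hs
  rw [Measure.bind_apply hs hf.aemeasurable, lintegral_add_measure, lintegral_smul_measure,
    lintegral_smul_measure, Measure.add_apply, Measure.smul_apply, Measure.smul_apply,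
    Measure.bind_apply hs hf.aemeasurable, Measure.bind_apply hs hf.aemeasurable, smul_eq_mul, smul_eq_mul]

lemma isProb_bind (μ : Measure ℝ) [IsProbabilityMeasure μ] {g : ℝ → Measure ℝ}
    (hg : Measurable g) (h : ∀ v, IsProbabilityMeasure (g v)) :
    IsProbabilityMeasure (μ.bind g) := by
  constructor
  rw [Measure.bind_apply MeasurableSet.univ hg.aemeasurable]
  simp [measure_univ]

lemma eq_dirac_of_compl (μ : Measure ℝ) [IsProbabilityMeasure μ] (a : ℝ) (h : μ {a}ᶜ = 0) :
    μ = Measure.dirac a := by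
  ext s hs
  rw [Measure.dirac_apply' a hs]
  by_cases ha : a ∈ s
  · have hsc : μ sᶜ = 0 := by
      refine measure_mono_null (fun x hx => ?_) h
      simp only [Set.mem_compl_iff, Set.mem_singleton_iff]
      rintro rfl
      exact hx ha
    have h1 : (1 : ℝ≥0∞) ≤ μ s := by
      have := measure_union_le (μ := μ) s sᶜ
      rw [Set.union_compl_self, measure_univ, hsc, add_zero] at this
      exact this
    have : μ s = 1 := le_antisymm prob_le_one h1
    simp [Set.indicator_of_mem ha, this]
  · have : μ s = 0 := by
      refine measure_mono_null (fun x hx => ?_) h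
      simp only [Set.mem_compl_iff, Set.mem_singleton_iff]
      rintro rfl
      exact ha hx
    simp [Set.indicator_of_notMem ha, this]

lemma mixWeight_zero (h3 : ℝ) : mixWeight h3 0 = 1 / 2 := by
  have : (0 - h3) ^ 2 = (0 + h3) ^ 2 := by ring
  rw [mixWeight, this]
  have he := Real.exp_pos (-(0 + h3) ^ 2 / 2)
  field_simp
  ring

lemma mixWeight_nonneg (h3 x : ℝ) : 0 ≤ mixWeight h3 x :=
  div_nonneg (Real.exp_nonneg _) (by positivity)

lemma mixWeight_le_one (h3 x : ℝ) : mixWeight h3 x ≤ 1 := by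
  rw [mixWeight, div_le_one (by positivity)]
  nlinarith [Real.exp_pos (-(x + h3) ^ 2 / 2)]

lemma half_lt_mixWeight (h3 : ℝ) (hh3 : h3 ≠ 0) : 1 / 2 < mixWeight h3 h3 := by
  have hE0 : (0:ℝ) < Real.exp (-(h3 + h3) ^ 2 / 2) := Real.exp_pos _
  have hE : Real.exp (-(h3 + h3) ^ 2 / 2) < 1 := by
    rw [Real.exp_lt_one_iff]
    have hne : h3 + h3 ≠ 0 := fun hc => hh3 (by linarith)
    have : (0:ℝ) < (h3 + h3) ^ 2 := lt_of_le_of_ne (sq_nonneg _) (Ne.symm (pow_ne_zero 2 hne))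
    linarith
  have h0 : -(h3 - h3) ^ 2 / 2 = 0 := by ring
  rw [mixWeight, h0, Real.exp_zero, lt_div_iff₀ (by positivity)]
  linarith


lemma measurable_Gchan (h2 : ℝ) : Measurable (Gchan h2) :=
  measurable_gaussFamily.comp (measurable_id.const_mul h2)

lemma key_bindG (h2 : ℝ) (μ : Measure ℝ) (s : ℝ) :
    ∫⁻ y, ENNReal.ofReal (Real.exp (s * y)) ∂(μ.bind (Gchan h2)) =
      ENNReal.ofReal (Real.exp (s ^ 2 / 2)) * ∫⁻ v, ENNReal.ofReal (Real.exp ((s * h2) * v)) ∂μ := by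
  rw [Measure.lintegral_bind (measurable_Gchan h2).aemeasurable (meas_expline s).aemeasurable]
  have : ∀ v : ℝ, ∫⁻ y, ENNReal.ofReal (Real.exp (s * y)) ∂(Gchan h2 v)
      = ENNReal.ofReal (Real.exp (s ^ 2 / 2)) * ENNReal.ofReal (Real.exp ((s * h2) * v)) := by
    intro v
    simp only [Gchan]
    rw [gauss_mgf, ← ENNReal.ofReal_mul (Real.exp_nonneg _), ← Real.exp_add]
    congr 2
    ring
  simp_rw [this]
  rw [lintegral_const_mul _ (meas_expline (s * h2))]

lemma extract {w : ℝ} (hw0 : 0 ≤ w) (hw1 : w ≤ 1) (hw : w ≠ 1 / 2)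
    {p q r t : ℝ≥0∞} (hp : p ≠ ∞) (hq : q ≠ ∞) (hr : r ≠ ∞) (ht : t ≠ ∞)
    (e0 : ENNReal.ofReal (1 / 2) * p + ENNReal.ofReal (1 - 1 / 2) * q
        = ENNReal.ofReal (1 / 2) * r + ENNReal.ofReal (1 - 1 / 2) * t)
    (e1 : ENNReal.ofReal w * p + ENNReal.ofReal (1 - w) * q
        = ENNReal.ofReal w * r + ENNReal.ofReal (1 - w) * t) :
    p = r ∧ q = t := by
  have E0 := congrArg ENNReal.toReal e0
  have E1 := congrArg ENNReal.toReal e1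
  rw [ENNReal.toReal_add (ENNReal.mul_ne_top ENNReal.ofReal_ne_top hp)
      (ENNReal.mul_ne_top ENNReal.ofReal_ne_top hq),
    ENNReal.toReal_add (ENNReal.mul_ne_top ENNReal.ofReal_ne_top hr)
      (ENNReal.mul_ne_top ENNReal.ofReal_ne_top ht),
    ENNReal.toReal_mul, ENNReal.toReal_mul, ENNReal.toReal_mul, ENNReal.toReal_mul,
    ENNReal.toReal_ofReal (by norm_num : (0:ℝ) ≤ 1 - 1/2),
    ENNReal.toReal_ofReal (by norm_num : (0:ℝ) ≤ 1/2)] at E0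
  rw [ENNReal.toReal_add (ENNReal.mul_ne_top ENNReal.ofReal_ne_top hp)
      (ENNReal.mul_ne_top ENNReal.ofReal_ne_top hq),
    ENNReal.toReal_add (ENNReal.mul_ne_top ENNReal.ofReal_ne_top hr)
      (ENNReal.mul_ne_top ENNReal.ofReal_ne_top ht),
    ENNReal.toReal_mul, ENNReal.toReal_mul, ENNReal.toReal_mul, ENNReal.toReal_mul,
    ENNReal.toReal_ofReal (by linarith : (0:ℝ) ≤ 1 - w),
    ENNReal.toReal_ofReal hw0] at E1
  have hpr : p.toReal = r.toReal := by
    have h2w : (2 * w - 1) * (p.toReal - r.toReal) = 0 := by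
      linear_combination E1 + (w - 1) * (2 * E0)
    rcases mul_eq_zero.mp h2w with h | h
    · exact absurd (by linarith : w = 1 / 2) hw
    · linarith
  have hqt : q.toReal = t.toReal := by linarith
  exact ⟨(ENNReal.toReal_eq_toReal_iff' hp hr).mp hpr, (ENNReal.toReal_eq_toReal_iff' hq ht).mp hqt⟩


end NonManipAux

open NonManipAux in
/-- **Non-manipulability of networks with nonzero coefficients.**
If `h1 ≠ 0`, `h2 ≠ 0` and `h3 ≠ 0`, then any Markov kernel `κ` whose composition with
the Gaussian observation channel leaves all conditional output laws unchanged must be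
the Dirac kernel `u ↦ δ_u` for Lebesgue-almost every `u`. -/
theorem nonmanipulable_of_nonzero_coeffs
    (h1 h2 h3 : ℝ) (hh1 : h1 ≠ 0) (hh2 : h2 ≠ 0) (hh3 : h3 ≠ 0)
    (κ : Kernel ℝ ℝ) [IsMarkovKernel κ]
    (hκ : ∀ x : ℝ,
      ((muX h1 h3 x).bind (κ ·)).bind (Gchan h2) = (muX h1 h3 x).bind (Gchan h2)) :
    ∀ᵐ u ∂(volume : Measure ℝ), κ u = Measure.dirac u := by
  classical
  have hGm : Measurable (Gchan h2) := measurable_Gchan h2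
  have hκm : Measurable (κ ·) := κ.measurable
  have iK : ∀ u : ℝ, IsProbabilityMeasure (κ u) := fun u => inferInstance
  have iG : ∀ v : ℝ, IsProbabilityMeasure (Gchan h2 v) := fun v =>
    show IsProbabilityMeasure (gaussianReal (h2 * v) 1) from inferInstance
  haveI i1 : IsProbabilityMeasure ((gaussianReal h1 1).bind (κ ·)) := isProb_bind _ hκm iK
  haveI i2 : IsProbabilityMeasure ((gaussianReal (-h1) 1).bind (κ ·)) := isProb_bind _ hκm iK
  haveI i3 : IsProbabilityMeasure (((gaussianReal h1 1).bind (κ ·)).bind (Gchan h2)) :=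
    isProb_bind _ hGm iG
  haveI i4 : IsProbabilityMeasure (((gaussianReal (-h1) 1).bind (κ ·)).bind (Gchan h2)) :=
    isProb_bind _ hGm iG
  haveI i5 : IsProbabilityMeasure ((gaussianReal h1 1).bind (Gchan h2)) := isProb_bind _ hGm iG
  haveI i6 : IsProbabilityMeasure ((gaussianReal (-h1) 1).bind (Gchan h2)) := isProb_bind _ hGm iG
  have hsplit : ∀ x : ℝ,
      ENNReal.ofReal (mixWeight h3 x) • (((gaussianReal h1 1).bind (κ ·)).bind (Gchan h2))
        + ENNReal.ofReal (1 - mixWeight h3 x)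
          • (((gaussianReal (-h1) 1).bind (κ ·)).bind (Gchan h2))
      = ENNReal.ofReal (mixWeight h3 x) • ((gaussianReal h1 1).bind (Gchan h2))
        + ENNReal.ofReal (1 - mixWeight h3 x) • ((gaussianReal (-h1) 1).bind (Gchan h2)) := by
    intro x
    have hx := hκ x
    simp only [muX] at hx
    rw [bind_smul_add _ _ _ _ hκm, bind_smul_add _ _ _ _ hGm, bind_smul_add _ _ _ _ hGm] at hx
    exact hx
  have hst : ∀ s : Set ℝ, MeasurableSet s →
      (((gaussianReal h1 1).bind (κ ·)).bind (Gchan h2)) s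
          = ((gaussianReal h1 1).bind (Gchan h2)) s
      ∧ (((gaussianReal (-h1) 1).bind (κ ·)).bind (Gchan h2)) s
          = ((gaussianReal (-h1) 1).bind (Gchan h2)) s := by
    intro s hs
    have e0 := congrArg (fun μ : Measure ℝ => μ s) (hsplit 0)
    have e1 := congrArg (fun μ : Measure ℝ => μ s) (hsplit h3)
    simp only [Measure.coe_add, Pi.add_apply, Measure.smul_apply, smul_eq_mul] at e0 e1
    rw [mixWeight_zero] at e0
    exact extract (mixWeight_nonneg h3 h3) (mixWeight_le_one h3 h3)
      (ne_of_gt (half_lt_mixWeight h3 hh3)) (measure_ne_top _ s) (measure_ne_top _ s)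
      (measure_ne_top _ s) (measure_ne_top _ s) e0 e1
  have hP : ((gaussianReal h1 1).bind (κ ·)).bind (Gchan h2)
      = (gaussianReal h1 1).bind (Gchan h2) := Measure.ext fun s hs => (hst s hs).1
  have hQ : ((gaussianReal (-h1) 1).bind (κ ·)).bind (Gchan h2)
      = (gaussianReal (-h1) 1).bind (Gchan h2) := Measure.ext fun s hs => (hst s hs).2
  -- step 2: moment identities
  have hkint : ∀ t : ℝ, Measurable fun u => ∫⁻ v, ENNReal.ofReal (Real.exp (t * v)) ∂κ u :=
    fun t => Measurable.lintegral_kernel_prod_right ((meas_expline t).comp measurable_snd)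
  have Eq1 : ∀ t : ℝ,
      ∫⁻ u, (∫⁻ v, ENNReal.ofReal (Real.exp (t * v)) ∂κ u) ∂(gaussianReal (-h1) 1)
        = ∫⁻ u, ENNReal.ofReal (Real.exp (t * u)) ∂(gaussianReal (-h1) 1) := by
    intro t
    have hcongr := congrArg
      (fun μ : Measure ℝ => ∫⁻ y, ENNReal.ofReal (Real.exp ((t / h2) * y)) ∂μ) hQ
    simp only [key_bindG, div_mul_cancel₀ t hh2] at hcongr
    have hc0 : ENNReal.ofReal (Real.exp ((t / h2) ^ 2 / 2)) ≠ 0 := by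
      simp only [ne_eq, ENNReal.ofReal_eq_zero, not_le]
      exact Real.exp_pos _
    have hcc := (ENNReal.mul_right_inj hc0 ENNReal.ofReal_ne_top).mp hcongr
    rwa [Measure.lintegral_bind hκm.aemeasurable (meas_expline t).aemeasurable] at hcc
  have hfm : Measurable fun u : ℝ => ENNReal.ofReal (Real.exp (2 * h1 * u)) :=
    meas_expline (2 * h1)
  have Eqf : ∀ t : ℝ,
      ∫⁻ u, ENNReal.ofReal (Real.exp (2 * h1 * u))
          * (∫⁻ v, ENNReal.ofReal (Real.exp (t * v)) ∂κ u) ∂(gaussianReal (-h1) 1)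
        = ∫⁻ u, ENNReal.ofReal (Real.exp (2 * h1 * u))
          * ENNReal.ofReal (Real.exp (t * u)) ∂(gaussianReal (-h1) 1) := by
    intro t
    have hP' : (((gaussianReal (-h1) 1).withDensity
          (fun u => ENNReal.ofReal (Real.exp (2 * h1 * u)))).bind (κ ·)).bind (Gchan h2)
        = ((gaussianReal (-h1) 1).withDensity
          (fun u => ENNReal.ofReal (Real.exp (2 * h1 * u)))).bind (Gchan h2) := by
      rw [← gauss_withDensity]; exact hP
    have hcongr := congrArg
      (fun μ : Measure ℝ => ∫⁻ y, ENNReal.ofReal (Real.exp ((t / h2) * y)) ∂μ) hP'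
    simp only [key_bindG, div_mul_cancel₀ t hh2] at hcongr
    have hc0 : ENNReal.ofReal (Real.exp ((t / h2) ^ 2 / 2)) ≠ 0 := by
      simp only [ne_eq, ENNReal.ofReal_eq_zero, not_le]
      exact Real.exp_pos _
    have hcc := (ENNReal.mul_right_inj hc0 ENNReal.ofReal_ne_top).mp hcongr
    rw [Measure.lintegral_bind hκm.aemeasurable (meas_expline t).aemeasurable,
      lintegral_withDensity_eq_lintegral_mul _ hfm (hkint t),
      lintegral_withDensity_eq_lintegral_mul _ hfm (meas_expline t)] at hcc
    simpa only [Pi.mul_apply] using hcc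
  -- step 3: the variance argument
  set ν : Measure ℝ := gaussianReal (-h1) 1 with hνdef
  set c4 : ℝ≥0∞ := ENNReal.ofReal (Real.exp (4 * h1 * (-h1) + (4 * h1) ^ 2 / 2)) with hc4def
  have mgf4 : ∫⁻ u, ENNReal.ofReal (Real.exp (4 * h1 * u)) ∂ν = c4 := gauss_mgf (-h1) (4 * h1)
  have hfe : ∀ u : ℝ, ENNReal.ofReal (Real.exp (2 * h1 * u))
      * ENNReal.ofReal (Real.exp (2 * h1 * u)) = ENNReal.ofReal (Real.exp (4 * h1 * u)) := by
    intro u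
    rw [← ENNReal.ofReal_mul (Real.exp_nonneg _), ← Real.exp_add]
    congr 1
    ring
  have c_fB : ∫⁻ u, ENNReal.ofReal (Real.exp (2 * h1 * u))
      * (∫⁻ v, ENNReal.ofReal (Real.exp (2 * h1 * v)) ∂κ u) ∂ν = c4 := by
    rw [Eqf (2 * h1)]
    simp_rw [hfe]
    exact mgf4
  have c_C : ∫⁻ u, (∫⁻ v, ENNReal.ofReal (Real.exp (4 * h1 * v)) ∂κ u) ∂ν = c4 := by
    rw [Eq1 (4 * h1)]
    exact mgf4
  -- pointwise identity
  have key_id : ∀ u v : ℝ,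
      ENNReal.ofReal ((Real.exp (2 * h1 * u) - Real.exp (2 * h1 * v)) ^ 2)
        + (ENNReal.ofReal (Real.exp (2 * h1 * u)) * ENNReal.ofReal (Real.exp (2 * h1 * v))
          + ENNReal.ofReal (Real.exp (2 * h1 * u)) * ENNReal.ofReal (Real.exp (2 * h1 * v)))
      = ENNReal.ofReal (Real.exp (4 * h1 * u)) + ENNReal.ofReal (Real.exp (4 * h1 * v)) := by
    intro u v
    have e4u : Real.exp (4 * h1 * u) = Real.exp (2 * h1 * u) * Real.exp (2 * h1 * u) := by
      rw [← Real.exp_add]; congr 1; ring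
    have e4v : Real.exp (4 * h1 * v) = Real.exp (2 * h1 * v) * Real.exp (2 * h1 * v) := by
      rw [← Real.exp_add]; congr 1; ring
    have hmerge : ∀ x y : ℝ, 0 ≤ x → 0 ≤ y →
        ENNReal.ofReal x + ENNReal.ofReal y = ENNReal.ofReal (x + y) :=
      fun x y hx hy => (ENNReal.ofReal_add hx hy).symm
    rw [← ENNReal.ofReal_mul (Real.exp_nonneg _),
      hmerge _ _ (by positivity) (by positivity),
      hmerge _ _ (sq_nonneg _) (by positivity),
      hmerge _ _ (Real.exp_nonneg _) (Real.exp_nonneg _)]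
    refine congrArg ENNReal.ofReal ?_
    rw [e4u, e4v]
    ring
  -- measurability of D
  have hgum : ∀ u : ℝ, Measurable fun v : ℝ =>
      ENNReal.ofReal ((Real.exp (2 * h1 * u) - Real.exp (2 * h1 * v)) ^ 2) := by
    intro u
    have : Continuous fun v : ℝ => (Real.exp (2 * h1 * u) - Real.exp (2 * h1 * v)) ^ 2 := by
      fun_prop
    exact this.measurable.ennreal_ofReal
  have hDm : Measurable fun u => ∫⁻ v,
      ENNReal.ofReal ((Real.exp (2 * h1 * u) - Real.exp (2 * h1 * v)) ^ 2) ∂κ u := by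
    apply Measurable.lintegral_kernel_prod_right
    have : Continuous fun p : ℝ × ℝ => (Real.exp (2 * h1 * p.1) - Real.exp (2 * h1 * p.2)) ^ 2 := by
      fun_prop
    exact this.measurable.ennreal_ofReal
  -- integrate the pointwise identity over κ u
  have per_u : ∀ u : ℝ,
      (∫⁻ v, ENNReal.ofReal ((Real.exp (2 * h1 * u) - Real.exp (2 * h1 * v)) ^ 2) ∂κ u)
        + (ENNReal.ofReal (Real.exp (2 * h1 * u))
            * (∫⁻ v, ENNReal.ofReal (Real.exp (2 * h1 * v)) ∂κ u)
          + ENNReal.ofReal (Real.exp (2 * h1 * u))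
            * (∫⁻ v, ENNReal.ofReal (Real.exp (2 * h1 * v)) ∂κ u))
      = ENNReal.ofReal (Real.exp (4 * h1 * u))
        + (∫⁻ v, ENNReal.ofReal (Real.exp (4 * h1 * v)) ∂κ u) := by
    intro u
    have hint := lintegral_congr (fun v => key_id u v) (μ := κ u)
    rw [lintegral_add_left (hgum u), lintegral_add_left
        (show Measurable fun v : ℝ => ENNReal.ofReal (Real.exp (2 * h1 * u))
          * ENNReal.ofReal (Real.exp (2 * h1 * v)) from
          ((measurable_const.mul (meas_expline (2 * h1))))),
      lintegral_const_mul _ (meas_expline (2 * h1)),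
      lintegral_add_left (measurable_const (a := ENNReal.ofReal (Real.exp (4 * h1 * u)))),
      lintegral_const, measure_univ, mul_one] at hint
    exact hint
  have tot := lintegral_congr per_u (μ := ν)
  rw [lintegral_add_left hDm, lintegral_add_left (show Measurable fun u => ENNReal.ofReal (Real.exp (2 * h1 * u))
      * ∫⁻ v, ENNReal.ofReal (Real.exp (2 * h1 * v)) ∂κ u from hfm.mul (hkint (2 * h1))),
    lintegral_add_left (meas_expline (4 * h1)), c_fB, c_C, mgf4] at tot
  have hD0 : ∫⁻ u, (∫⁻ v,
      ENNReal.ofReal ((Real.exp (2 * h1 * u) - Real.exp (2 * h1 * v)) ^ 2) ∂κ u) ∂ν = 0 := by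
    have hfin : c4 + c4 ≠ ∞ :=
      ENNReal.add_ne_top.mpr ⟨ENNReal.ofReal_ne_top, ENNReal.ofReal_ne_top⟩
    refine (ENNReal.add_left_inj hfin).mp ?_
    rw [zero_add]
    exact tot
  -- conclude
  refine (gaussianReal_absolutelyContinuous' (-h1) one_ne_zero).ae_le ?_
  have hae := (lintegral_eq_zero_iff hDm).mp hD0
  filter_upwards [hae] with u hu
  have hu' : ∫⁻ v, ENNReal.ofReal ((Real.exp (2 * h1 * u) - Real.exp (2 * h1 * v)) ^ 2) ∂κ u
      = 0 := hu
  have hae2 := (lintegral_eq_zero_iff (hgum u)).mp hu'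
  rw [Filter.EventuallyEq, ae_iff] at hae2
  have hset : {v : ℝ | ¬ (ENNReal.ofReal
      ((Real.exp (2 * h1 * u) - Real.exp (2 * h1 * v)) ^ 2) = (0 : ℝ → ℝ≥0∞) v)} = {u}ᶜ := by
    ext v
    simp only [Set.mem_setOf_eq, Pi.zero_apply, Set.mem_compl_iff, Set.mem_singleton_iff,
      ENNReal.ofReal_eq_zero, not_le]
    constructor
    · intro hpos hvu
      rw [hvu] at hpos
      simp at hpos
    · intro hvu
      have hne : Real.exp (2 * h1 * u) ≠ Real.exp (2 * h1 * v) := by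
        rw [ne_eq, Real.exp_eq_exp]
        intro hc
        exact hvu (mul_left_cancel₀ (by simp [hh1] : (2 : ℝ) * h1 ≠ 0) hc).symm
      have := sub_ne_zero_of_ne hne
      exact lt_of_le_of_ne (sq_nonneg _) (Ne.symm (pow_ne_zero 2 this))
  rw [hset] at hae2
  exact eq_dirac_of_compl (κ u) u hae2
end

section
/- Suppose h1 = 0 or h2 = 0 or h3 = 0. Then the Gaussian observation channel is manipulable: there exists a Markov kernel κ from ℝ to ℝ such that (μ_x.bind κ).bind G = μ_x.bind G for every x ∈ ℝ, yet the set {u ∈ ℝ : κ(u) ≠ δ_u} has positive Lebesgue measure. -/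
open MeasureTheory ProbabilityTheory

lemma mixWeight_nonneg (h3 x : ℝ) : 0 ≤ mixWeight h3 x := by
  unfold mixWeight
  positivity

lemma mixWeight_le_one (h3 x : ℝ) : mixWeight h3 x ≤ 1 := by
  unfold mixWeight
  rw [div_le_one (by positivity)]
  nlinarith [Real.exp_pos (-(x + h3) ^ 2 / 2)]

instance muX_prob (h1 h3 x : ℝ) : IsProbabilityMeasure (muX h1 h3 x) := by
  constructor
  simp only [muX, Measure.add_apply, Measure.smul_apply, smul_eq_mul,
    measure_univ, mul_one]
  rw [← ENNReal.ofReal_add (mixWeight_nonneg h3 x) (by linarith [mixWeight_le_one h3 x])]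
  norm_num

lemma muX_noAtoms (h1 h3 x : ℝ) : NoAtoms (muX h1 h3 x) := by
  constructor
  intro u
  have h : (gaussianReal h1 1) {u} = 0 :=
    gaussianReal_absolutelyContinuous h1 (v := 1) one_ne_zero (measure_singleton u)
  have h' : (gaussianReal (-h1) 1) {u} = 0 :=
    gaussianReal_absolutelyContinuous (-h1) (v := 1) one_ne_zero (measure_singleton u)
  simp [muX, Measure.add_apply, Measure.smul_apply, h, h']

lemma muX_h1_zero (h3 x : ℝ) : muX 0 h3 x = gaussianReal 0 1 := by
  rw [muX, neg_zero, ← add_smul,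
    ← ENNReal.ofReal_add (mixWeight_nonneg h3 x) (by linarith [mixWeight_le_one h3 x])]
  norm_num

lemma mixWeight_zero (x : ℝ) : mixWeight 0 x = 1 / 2 := by
  unfold mixWeight
  rw [sub_zero, add_zero, ← two_mul]
  rw [div_eq_div_iff (by positivity) (by norm_num)]
  ring

lemma muX_h3_zero (h1 x : ℝ) : muX h1 0 x = muX h1 0 0 := by
  rw [muX, muX, mixWeight_zero, mixWeight_zero]

/-- **Manipulability when some channel coefficient vanishes.**
If `h1 = 0` or `h2 = 0` or `h3 = 0`, then there is a Markov kernel `κ` (an attack)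
that leaves every conditional output law unchanged although the set of `u` where
`κ u` differs from the Dirac measure `δ_u` has positive Lebesgue measure. -/
theorem manipulable_of_zero_coeff
    (h1 h2 h3 : ℝ) (h0 : h1 = 0 ∨ h2 = 0 ∨ h3 = 0) :
    ∃ κ : Kernel ℝ ℝ, IsMarkovKernel κ ∧
      (∀ x : ℝ,
        ((muX h1 h3 x).bind (κ ·)).bind (Gchan h2) = (muX h1 h3 x).bind (Gchan h2)) ∧
      0 < volume {u : ℝ | κ u ≠ Measure.dirac u} := by
  refine ⟨Kernel.const ℝ (muX h1 h3 0), inferInstance, ?_, ?_⟩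
  · intro x
    have hbind : (muX h1 h3 x).bind ((Kernel.const ℝ (muX h1 h3 0)) ·) = muX h1 h3 0 := by
      simp [Kernel.const_apply, Measure.bind_const, measure_univ]
    rw [hbind]
    rcases h0 with h | h | h
    · subst h; rw [muX_h1_zero, muX_h1_zero]
    · subst h
      have : Gchan 0 = fun _ => gaussianReal 0 1 := by
        funext v; simp [Gchan]
      rw [this, Measure.bind_const, Measure.bind_const, measure_univ, measure_univ]
    · subst h; rw [muX_h3_zero h1 x]
  · have : {u : ℝ | (Kernel.const ℝ (muX h1 h3 0)) u ≠ Measure.dirac u} = Set.univ := by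
      ext u
      simp only [Set.mem_setOf_eq, Set.mem_univ, iff_true, Kernel.const_apply]
      intro hc
      have h0' : muX h1 h3 0 {u} = 0 := by
        have := muX_noAtoms h1 h3 0
        exact @measure_singleton _ _ _ this u
      rw [hc] at h0'
      simp at h0'
    rw [this]
    simp
end

section
/- Suppose h1 ≠ 0 and h3 ≠ 0. If a Markov kernel κ from ℝ to ℝ satisfies μ_x.bind κ = μ_x for every x ∈ ℝ (i.e., no i.i.d. attack can make the conditional distribution of the relay's forwarded symbol given the direct observation equal to the conditional distribution of the relay's received symbol given the direct observation, unless it is trivial), then κ(u) = δ_u for Lebesgue-almost every u ∈ ℝ. -/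
open MeasureTheory ProbabilityTheory

open scoped ENNReal NNReal

namespace NoAttackAux

lemma tilt_pdf (m t c v : ℝ) :
    gaussianPDFReal m 1 v * Real.exp (t*v + c)
      = Real.exp (t*m + t^2/2 + c) * gaussianPDFReal (m+t) 1 v := by
  simp only [gaussianPDFReal, NNReal.coe_one, mul_one]
  rw [mul_assoc, ← Real.exp_add, mul_left_comm, ← Real.exp_add]
  congr 1
  ring

lemma meas_exp (t c : ℝ) : Measurable (fun v => ENNReal.ofReal (Real.exp (t*v + c))) :=
  (Real.measurable_exp.comp ((measurable_id.const_mul t).add_const c)).ennreal_ofReal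

lemma lintegral_exp_gaussian (m t c : ℝ) :
    ∫⁻ v, ENNReal.ofReal (Real.exp (t*v + c)) ∂(gaussianReal m 1)
      = ENNReal.ofReal (Real.exp (t*m + t^2/2 + c)) := by
  rw [gaussianReal_of_var_ne_zero _ one_ne_zero,
    lintegral_withDensity_eq_lintegral_mul _ (measurable_gaussianPDF _ _) (meas_exp t c)]
  have : ∀ v, (gaussianPDF m 1 * fun v => ENNReal.ofReal (Real.exp (t*v + c))) v
      = ENNReal.ofReal (Real.exp (t*m + t^2/2 + c)) * ENNReal.ofReal (gaussianPDFReal (m+t) 1 v) := by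
    intro v
    simp only [Pi.mul_apply, gaussianPDF]
    rw [← ENNReal.ofReal_mul (gaussianPDFReal_nonneg _ _ _), tilt_pdf,
      ENNReal.ofReal_mul (Real.exp_nonneg _)]
  simp_rw [this]
  rw [lintegral_const_mul _ ((measurable_gaussianPDFReal _ _).ennreal_ofReal),
    lintegral_gaussianPDFReal_eq_one _ one_ne_zero, mul_one]

lemma gaussian_tilt (a b : ℝ) :
    gaussianReal b 1 = (gaussianReal a 1).withDensity
      (fun u => ENNReal.ofReal (Real.exp ((b-a)*u + (a^2-b^2)/2))) := by
  rw [gaussianReal_of_var_ne_zero a one_ne_zero, gaussianReal_of_var_ne_zero b one_ne_zero,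
    ← withDensity_mul _ (measurable_gaussianPDF _ _) (meas_exp _ _)]
  congr 1
  funext v
  simp only [Pi.mul_apply, gaussianPDF]
  rw [← ENNReal.ofReal_mul (gaussianPDFReal_nonneg _ _ _), tilt_pdf]
  have h2 : (b-a)*a + (b-a)^2/2 + (a^2-b^2)/2 = 0 := by ring
  rw [h2, Real.exp_zero, one_mul]; ring_nf

lemma amgm (x y : ℝ≥0∞) : 2 * (x * y) ≤ x^2 + y^2 := by
  rcases eq_or_ne x ⊤ with hx | hx
  · have : x^2 + y^2 = ⊤ := by simp [hx, ENNReal.pow_eq_top_iff]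
    simp [this]
  rcases eq_or_ne y ⊤ with hy | hy
  · have : x^2 + y^2 = ⊤ := by simp [hy, ENNReal.pow_eq_top_iff]
    simp [this]
  lift x to ℝ≥0 using hx
  lift y to ℝ≥0 using hy
  have h : (2:ℝ≥0) * (x*y) ≤ x^2 + y^2 := by
    rw [← NNReal.coe_le_coe]; push_cast; nlinarith [sq_nonneg ((x:ℝ)-y)]
  exact_mod_cast h

end NoAttackAux

namespace Test

lemma kernel_fixes_exp (a b : ℝ) (κ : Kernel ℝ ℝ) [IsMarkovKernel κ]
    (hP : (gaussianReal a 1).bind (κ ·) = gaussianReal a 1)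
    (hQ : (gaussianReal b 1).bind (κ ·) = gaussianReal b 1) :
    ∀ᵐ u ∂(volume : Measure ℝ),
      ∫⁻ v, ENNReal.ofReal (Real.exp ((b-a)*v)) ∂κ u = ENNReal.ofReal (Real.exp ((b-a)*u)) := by
  have mκ : Measurable (κ ·) := κ.measurable
  set t := b - a with ht
  set c := (a^2-b^2)/2 with hc
  set P := gaussianReal a 1 with hPdef
  set ρ : ℝ → ℝ≥0∞ := fun u => ENNReal.ofReal (Real.exp (t*u + c)) with hρ
  have mρ : Measurable ρ := NoAttackAux.meas_exp t c
  have hρsq : ∀ v, ρ v ^ 2 = ENNReal.ofReal (Real.exp ((2*t)*v + 2*c)) := by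
    intro v
    rw [hρ, ← ENNReal.ofReal_pow (Real.exp_nonneg _), ← Real.exp_nat_mul]
    norm_num
    ring_nf
  have mρ2 : Measurable (fun v => ρ v ^ 2) := mρ.pow_const 2
  have inv : ∀ (μ : Measure ℝ), μ.bind (κ ·) = μ → ∀ {f : ℝ → ℝ≥0∞}, Measurable f →
      ∫⁻ u, (∫⁻ v, f v ∂κ u) ∂μ = ∫⁻ v, f v ∂μ := by
    intro μ hμ f hf
    conv_rhs => rw [← hμ]
    rw [Measure.lintegral_bind mκ.aemeasurable hf.aemeasurable]
  set F : ℝ → ℝ≥0∞ := fun u => ∫⁻ v, ρ v ∂κ u with hF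
  have mF : Measurable F := Measurable.lintegral_kernel mρ
  set F2 : ℝ → ℝ≥0∞ := fun u => ∫⁻ v, ρ v ^ 2 ∂κ u with hF2
  have mF2 : Measurable F2 := Measurable.lintegral_kernel mρ2
  -- moment values
  have c1 : ∫⁻ u, ρ u ∂P = ENNReal.ofReal (Real.exp (t*a + t^2/2 + c)) :=
    NoAttackAux.lintegral_exp_gaussian a t c
  have c2 : ∫⁻ u, ρ u ^ 2 ∂P = ENNReal.ofReal (Real.exp ((2*t)*a + (2*t)^2/2 + 2*c)) := by
    simp_rw [hρsq]; exact NoAttackAux.lintegral_exp_gaussian a (2*t) (2*c)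
  have c2ne : ∫⁻ u, ρ u ^ 2 ∂P ≠ ⊤ := by rw [c2]; exact ENNReal.ofReal_ne_top
  -- invariance facts
  have hFP : ∫⁻ u, F u ∂P = ∫⁻ u, ρ u ∂P := inv P hP mρ
  have hF2P : ∫⁻ u, F2 u ∂P = ∫⁻ u, ρ u ^ 2 ∂P := inv P hP mρ2
  have hQP : gaussianReal b 1 = P.withDensity ρ := NoAttackAux.gaussian_tilt a b
  have hFρ : ∫⁻ u, ρ u * F u ∂P = ∫⁻ u, ρ u ^ 2 ∂P := by
    have h1 : ∫⁻ u, F u ∂(gaussianReal b 1) = ∫⁻ u, ρ u ∂(gaussianReal b 1) := inv _ hQ mρ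
    rw [hQP, lintegral_withDensity_eq_lintegral_mul _ mρ mF,
      lintegral_withDensity_eq_lintegral_mul _ mρ mρ] at h1
    simpa [pow_two] using h1
  -- pointwise Cauchy-Schwarz
  have hCS : ∀ u, F u ^ 2 ≤ F2 u := by
    intro u
    have h2 : Real.HolderConjugate 2 2 := Real.holderConjugate_iff.mpr ⟨one_lt_two, by norm_num⟩
    have := ENNReal.lintegral_mul_le_Lp_mul_Lq (κ u) h2 mρ.aemeasurable
      measurable_one.aemeasurable
    simp only [Pi.mul_apply, Pi.one_apply, mul_one] at this
    have h1 : ∀ v : ℝ, (1:ℝ≥0∞) ^ (2:ℝ) = 1 := by simp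
    rw [show ∀ x : ℝ≥0∞, x ^ (2:ℝ) = x ^ 2 from fun x => by
        rw [← ENNReal.rpow_natCast x 2]; norm_num] at this
    have hone : ∫⁻ (_ : ℝ), (1:ℝ≥0∞) ^ 2 ∂κ u = 1 := by simp
    rw [hone, ENNReal.one_rpow, mul_one] at this
    have hb : F u ≤ F2 u ^ (1/2:ℝ) := by simpa [hF, hF2] using this
    refine le_trans (pow_le_pow_left' hb 2) (le_of_eq ?_)
    rw [← ENNReal.rpow_natCast (F2 u ^ (1/2:ℝ)) 2, ← ENNReal.rpow_mul]
    norm_num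
  -- the L² argument
  set S : ℝ → ℝ≥0∞ := fun u => F u ^ 2 + ρ u ^ 2 with hS
  set T : ℝ → ℝ≥0∞ := fun u => 2 * (F u * ρ u) with hT
  have mT : Measurable T := (mF.mul mρ).const_mul 2
  have mS : Measurable S := (mF.pow_const 2).add mρ2
  have hTS : ∀ u, T u ≤ S u := fun u => NoAttackAux.amgm _ _
  have hTint : ∫⁻ u, T u ∂P = 2 * ∫⁻ u, ρ u ^ 2 ∂P := by
    rw [hT, lintegral_const_mul _ (show Measurable fun u => F u * ρ u from mF.mul mρ)]
    congr 1
    rw [← hFρ]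
    congr 1; funext u; rw [mul_comm]
  have hSint : ∫⁻ u, S u ∂P ≤ 2 * ∫⁻ u, ρ u ^ 2 ∂P := by
    rw [hS, lintegral_add_left (mF.pow_const 2), two_mul]
    refine add_le_add ?_ le_rfl
    calc ∫⁻ u, F u ^ 2 ∂P ≤ ∫⁻ u, F2 u ∂P := lintegral_mono hCS
    _ = _ := hF2P
  have hint_eq : ∫⁻ u, S u ∂P = ∫⁻ u, T u ∂P :=
    le_antisymm (hSint.trans_eq hTint.symm) (lintegral_mono hTS)
  have hTne : ∫⁻ u, T u ∂P ≠ ⊤ := by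
    rw [hTint]; exact ENNReal.mul_ne_top (by norm_num) c2ne
  have hsub : ∫⁻ u, (S u - T u) ∂P = 0 := by
    rw [lintegral_sub mT hTne (ae_of_all _ hTS), hint_eq, tsub_self]
  have hae : ∀ᵐ u ∂P, S u - T u = 0 := by
    have := (lintegral_eq_zero_iff (mS.sub mT)).mp hsub
    filter_upwards [this] with u hu using hu
  have hFfin : ∀ᵐ u ∂P, F u < ⊤ :=
    ae_lt_top mF (by rw [hFP, c1]; exact ENNReal.ofReal_ne_top)
  have hFeqρ : ∀ᵐ u ∂P, F u = ρ u := by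
    filter_upwards [hae, hFfin] with u h1 h2
    have hρfin : ρ u ≠ ⊤ := ENNReal.ofReal_ne_top
    have hFne : F u ≠ ⊤ := h2.ne
    have hST : S u = T u := le_antisymm (tsub_eq_zero_iff_le.mp h1) (hTS u)
    have hx : (F u).toReal ^ 2 + (ρ u).toReal ^ 2
        = 2 * ((F u).toReal * (ρ u).toReal) := by
      have h3 := congrArg ENNReal.toReal hST
      rw [hS, hT] at h3
      simp only [] at h3
      rw [ENNReal.toReal_add (by simp [ENNReal.pow_eq_top_iff, hFne])
          (by simp [ENNReal.pow_eq_top_iff, hρfin]), ENNReal.toReal_pow, ENNReal.toReal_pow,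
        ENNReal.toReal_mul, ENNReal.toReal_mul] at h3
      simpa using h3
    have hxy : (F u).toReal = (ρ u).toReal := by
      nlinarith [sq_nonneg ((F u).toReal - (ρ u).toReal)]
    exact (ENNReal.toReal_eq_toReal_iff' hFne hρfin).mp hxy
  have hvol : ∀ᵐ u ∂(volume : Measure ℝ), F u = ρ u :=
    (gaussianReal_absolutelyContinuous' a one_ne_zero).ae_le hFeqρ
  have mexp : Measurable fun v : ℝ => ENNReal.ofReal (Real.exp (t*v)) :=
    (Real.measurable_exp.comp (measurable_id.const_mul t)).ennreal_ofReal
  have hsplit : ∀ x : ℝ, ENNReal.ofReal (Real.exp (t*x + c))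
      = ENNReal.ofReal (Real.exp (t*x)) * ENNReal.ofReal (Real.exp c) := by
    intro x; rw [← ENNReal.ofReal_mul (Real.exp_nonneg _), ← Real.exp_add]
  filter_upwards [hvol] with u hu
  have hL : (∫⁻ v, ENNReal.ofReal (Real.exp (t*v)) ∂κ u) * ENNReal.ofReal (Real.exp c)
      = ENNReal.ofReal (Real.exp (t*u)) * ENNReal.ofReal (Real.exp c) := by
    rw [← lintegral_mul_const _ mexp]
    simp_rw [← hsplit]
    simpa [hF, hρ] using hu
  exact (ENNReal.mul_left_inj
    (ne_of_gt (ENNReal.ofReal_pos.mpr (Real.exp_pos c))) ENNReal.ofReal_ne_top).mp hL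

end Test

namespace Step3

lemma two_le_exp_add (y : ℝ) : 2 ≤ Real.exp y + Real.exp (-y) := by
  have h1 : Real.exp (y/2) * Real.exp (y/2) = Real.exp y := by
    rw [← Real.exp_add]; ring_nf
  have h2 : Real.exp (-(y/2)) * Real.exp (-(y/2)) = Real.exp (-y) := by
    rw [← Real.exp_add]; ring_nf
  have h3 : Real.exp (y/2) * Real.exp (-(y/2)) = 1 := by
    rw [← Real.exp_add]; simp
  nlinarith [sq_nonneg (Real.exp (y/2) - Real.exp (-(y/2)))]

lemma eq_zero_of_exp_add_le (y : ℝ) (h : Real.exp y + Real.exp (-y) ≤ 2) : y = 0 := by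
  have h1 : Real.exp (y/2) * Real.exp (y/2) = Real.exp y := by
    rw [← Real.exp_add]; ring_nf
  have h2 : Real.exp (-(y/2)) * Real.exp (-(y/2)) = Real.exp (-y) := by
    rw [← Real.exp_add]; ring_nf
  have h3 : Real.exp (y/2) * Real.exp (-(y/2)) = 1 := by
    rw [← Real.exp_add]; simp
  have h4 : Real.exp (y/2) = Real.exp (-(y/2)) := by
    nlinarith [sq_nonneg (Real.exp (y/2) - Real.exp (-(y/2)))]
  have := Real.exp_eq_exp.mp h4
  linarith

lemma eq_dirac_of_exp (s : ℝ) (hs : s ≠ 0) (u : ℝ) (ν : Measure ℝ) [IsProbabilityMeasure ν]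
    (hp : ∫⁻ v, ENNReal.ofReal (Real.exp (s*v)) ∂ν = ENNReal.ofReal (Real.exp (s*u)))
    (hm : ∫⁻ v, ENNReal.ofReal (Real.exp (-(s*v))) ∂ν = ENNReal.ofReal (Real.exp (-(s*u)))) :
    ν = Measure.dirac u := by
  set G : ℝ → ℝ≥0∞ := fun v =>
    ENNReal.ofReal (Real.exp (s*v)) * ENNReal.ofReal (Real.exp (-(s*u)))
    + ENNReal.ofReal (Real.exp (-(s*v))) * ENNReal.ofReal (Real.exp (s*u)) with hG
  have m1 : Measurable fun v : ℝ => ENNReal.ofReal (Real.exp (s*v)) :=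
    (Real.measurable_exp.comp (measurable_id.const_mul s)).ennreal_ofReal
  have m2 : Measurable fun v : ℝ => ENNReal.ofReal (Real.exp (-(s*v))) :=
    (Real.measurable_exp.comp ((measurable_id.const_mul s).neg)).ennreal_ofReal
  have mG : Measurable G := (m1.mul_const _).add (m2.mul_const _)
  have hGint : ∫⁻ v, G v ∂ν = 2 := by
    rw [hG]
    rw [lintegral_add_left (m1.mul_const _), lintegral_mul_const _ m1,
      lintegral_mul_const _ m2, hp, hm,
      ← ENNReal.ofReal_mul (Real.exp_nonneg _), ← ENNReal.ofReal_mul (Real.exp_nonneg _),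
      ← Real.exp_add, ← Real.exp_add]
    norm_num
  have hG2 : ∀ v, (2:ℝ≥0∞) ≤ G v := by
    intro v
    rw [hG]
    simp only []
    rw [← ENNReal.ofReal_mul (Real.exp_nonneg _), ← ENNReal.ofReal_mul (Real.exp_nonneg _),
      ← Real.exp_add, ← Real.exp_add,
      ← ENNReal.ofReal_add (Real.exp_nonneg _) (Real.exp_nonneg _)]
    have h2 : (2:ℝ≥0∞) = ENNReal.ofReal 2 := by norm_num
    rw [h2]
    apply ENNReal.ofReal_le_ofReal
    have := two_le_exp_add (s*v + -(s*u))
    have hsw : -(s*v) + s*u = -(s*v + -(s*u)) := by ring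
    rw [hsw]
    exact this
  have hsub : ∫⁻ v, (G v - 2) ∂ν = 0 := by
    rw [lintegral_sub measurable_const (by simp) (ae_of_all _ hG2), hGint]
    simp
  have hae : ∀ᵐ v ∂ν, G v - 2 = 0 := by
    have := (lintegral_eq_zero_iff (mG.sub measurable_const)).mp hsub
    filter_upwards [this] with v hv using hv
  have haev : ∀ᵐ v ∂ν, v = u := by
    filter_upwards [hae] with v hv
    have hle : G v ≤ 2 := tsub_eq_zero_iff_le.mp hv
    rw [hG] at hle
    simp only [] at hle
    rw [← ENNReal.ofReal_mul (Real.exp_nonneg _), ← ENNReal.ofReal_mul (Real.exp_nonneg _),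
      ← Real.exp_add, ← Real.exp_add,
      ← ENNReal.ofReal_add (Real.exp_nonneg _) (Real.exp_nonneg _),
      show (2:ℝ≥0∞) = ENNReal.ofReal 2 by norm_num,
      ENNReal.ofReal_le_ofReal_iff (by norm_num)] at hle
    have hsw : -(s*v) + s*u = -(s*v + -(s*u)) := by ring
    rw [hsw] at hle
    have hy := eq_zero_of_exp_add_le _ hle
    have : v - u = 0 := by
      rcases mul_eq_zero.mp (show s * (v - u) = 0 by rw [mul_sub]; linarith) with h | h
      · exact absurd h hs
      · exact h
    linarith
  have hmap : ν.map (fun v => v) = ν.map (fun _ => u) := Measure.map_congr haev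
  rwa [Measure.map_id', Measure.map_const, measure_univ, one_smul] at hmap

end Step3

namespace Step1

lemma mixWeight_pos (h3 x : ℝ) : 0 < mixWeight h3 x := by
  unfold mixWeight
  have := Real.exp_pos (-(x - h3) ^ 2 / 2)
  have := Real.exp_pos (-(x + h3) ^ 2 / 2)
  positivity

lemma mixWeight_lt_one (h3 x : ℝ) : mixWeight h3 x < 1 := by
  unfold mixWeight
  rw [div_lt_one (by positivity)]
  linarith [Real.exp_pos (-(x + h3) ^ 2 / 2)]

lemma mixWeight_zero (h3 : ℝ) : mixWeight h3 0 = 1/2 := by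
  unfold mixWeight
  have h : (0 - h3)^2 = (0 + h3)^2 := by ring
  rw [h]
  have := Real.exp_pos (-(0 + h3) ^ 2 / 2)
  field_simp
  ring

lemma mixWeight_self_ne (h3 : ℝ) (hh3 : h3 ≠ 0) : mixWeight h3 h3 ≠ 1/2 := by
  unfold mixWeight
  have h0 : (h3 - h3)^2 = 0 := by ring
  rw [h0]
  have he1 : Real.exp (-(0:ℝ)/2) = 1 := by norm_num
  rw [he1]
  have hne : h3 + h3 ≠ 0 := fun h => hh3 (by linarith)
  have hposq : (0:ℝ) < (h3+h3)^2 := by positivity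
  have hlt : Real.exp (-(h3+h3)^2/2) < 1 := by
    calc Real.exp (-(h3+h3)^2/2) < Real.exp 0 := Real.exp_lt_exp.mpr (by linarith)
    _ = 1 := Real.exp_zero
  intro hcon
  have hd : (0:ℝ) < 1 + Real.exp (-(h3+h3)^2/2) := by positivity
  rw [div_eq_div_iff hd.ne' (by norm_num : (2:ℝ) ≠ 0)] at hcon
  linarith

lemma bind_gaussians (h1 h3 : ℝ) (hh3 : h3 ≠ 0) (κ : Kernel ℝ ℝ) [IsMarkovKernel κ]
    (hκ : ∀ x : ℝ, (muX h1 h3 x).bind (κ ·) = muX h1 h3 x) :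
    (gaussianReal h1 1).bind (κ ·) = gaussianReal h1 1 ∧
    (gaussianReal (-h1) 1).bind (κ ·) = gaussianReal (-h1) 1 := by
  set P := gaussianReal h1 1 with hP
  set Q := gaussianReal (-h1) 1 with hQ
  have mκ : Measurable (κ ·) := κ.measurable
  have key : ∀ A : Set ℝ, MeasurableSet A →
      (P.bind (κ ·)) A = P A ∧ (Q.bind (κ ·)) A = Q A := by
    intro A hA
    have hx : ∀ x : ℝ,
        ENNReal.ofReal (mixWeight h3 x) * (P.bind (κ ·)) A
          + ENNReal.ofReal (1 - mixWeight h3 x) * (Q.bind (κ ·)) A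
        = ENNReal.ofReal (mixWeight h3 x) * P A
          + ENNReal.ofReal (1 - mixWeight h3 x) * Q A := by
      intro x
      have h := congrArg (fun μ : Measure ℝ => μ A) (hκ x)
      simp only [muX, ← hP, ← hQ] at h
      rw [Measure.bind_apply hA mκ.aemeasurable, lintegral_add_measure, lintegral_smul_measure,
        lintegral_smul_measure, ← Measure.bind_apply hA mκ.aemeasurable, ← Measure.bind_apply hA mκ.aemeasurable,
        Measure.add_apply, Measure.smul_apply, Measure.smul_apply, smul_eq_mul, smul_eq_mul]
        at h
      exact h
    -- finiteness
    have hbound : ∀ (μ : Measure ℝ), IsProbabilityMeasure μ → (μ.bind (κ ·)) A ≤ 1 := by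
      intro μ hμ
      rw [Measure.bind_apply hA mκ.aemeasurable]
      calc ∫⁻ u, (κ u) A ∂μ ≤ ∫⁻ _, 1 ∂μ := lintegral_mono fun u => prob_le_one
      _ = 1 := by simp
    have hPfin : (P.bind (κ ·)) A ≠ ⊤ := (hbound P inferInstance).trans_lt (by norm_num) |>.ne
    have hQfin : (Q.bind (κ ·)) A ≠ ⊤ := (hbound Q inferInstance).trans_lt (by norm_num) |>.ne
    set a := ((P.bind (κ ·)) A).toReal with ha
    set b := ((Q.bind (κ ·)) A).toReal with hb
    set p := (P A).toReal with hp
    set q := (Q A).toReal with hq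
    have hPAfin : P A ≠ ⊤ := measure_ne_top _ _
    have hQAfin : Q A ≠ ⊤ := measure_ne_top _ _
    have hreal : ∀ x : ℝ,
        mixWeight h3 x * a + (1 - mixWeight h3 x) * b
        = mixWeight h3 x * p + (1 - mixWeight h3 x) * q := by
      intro x
      have h := congrArg ENNReal.toReal (hx x)
      have hw0 : 0 ≤ mixWeight h3 x := (mixWeight_pos h3 x).le
      have hw1 : 0 ≤ 1 - mixWeight h3 x := by linarith [mixWeight_lt_one h3 x]
      rw [ENNReal.toReal_add (ENNReal.mul_ne_top ENNReal.ofReal_ne_top hPfin)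
          (ENNReal.mul_ne_top ENNReal.ofReal_ne_top hQfin),
        ENNReal.toReal_add (ENNReal.mul_ne_top ENNReal.ofReal_ne_top hPAfin)
          (ENNReal.mul_ne_top ENNReal.ofReal_ne_top hQAfin),
        ENNReal.toReal_mul, ENNReal.toReal_mul, ENNReal.toReal_mul, ENNReal.toReal_mul,
        ENNReal.toReal_ofReal hw0, ENNReal.toReal_ofReal hw1] at h
      exact h
    have h0 := hreal 0
    rw [mixWeight_zero h3] at h0
    have hh := hreal h3
    have hwne := mixWeight_self_ne h3 hh3
    have hd : (2 * mixWeight h3 h3 - 1) * (a - p) = 0 := by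
      linear_combination hh - (2 - 2 * mixWeight h3 h3) * h0
    have hap : a = p := by
      rcases mul_eq_zero.mp hd with h | h
      · exact absurd (by linarith : mixWeight h3 h3 = 1/2) hwne
      · linarith
    have hbq : b = q := by linarith
    exact ⟨(ENNReal.toReal_eq_toReal_iff' hPfin hPAfin).mp hap,
      (ENNReal.toReal_eq_toReal_iff' hQfin hQAfin).mp hbq⟩
  exact ⟨Measure.ext fun A hA => (key A hA).1, Measure.ext fun A hA => (key A hA).2⟩

end Step1


/-- **No nontrivial i.i.d. attack preserves all the conditional laws `μ_x` (Lemma 1).**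
If `h1 ≠ 0` and `h3 ≠ 0` and a Markov kernel `κ` satisfies `μ_x.bind κ = μ_x` for
every `x`, then `κ u = δ_u` for Lebesgue-almost every `u`. -/
theorem no_nontrivial_iid_attack (h1 h3 : ℝ) (hh1 : h1 ≠ 0) (hh3 : h3 ≠ 0)
    (κ : Kernel ℝ ℝ) [IsMarkovKernel κ]
    (hκ : ∀ x : ℝ, (muX h1 h3 x).bind (κ ·) = muX h1 h3 x) :
    ∀ᵐ u ∂(volume : Measure ℝ), κ u = Measure.dirac u := by
  obtain ⟨hP, hQ⟩ := Step1.bind_gaussians h1 h3 hh3 κ hκ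
  have k1 := Test.kernel_fixes_exp h1 (-h1) κ hP hQ
  have k2 := Test.kernel_fixes_exp (-h1) h1 κ hQ hP
  filter_upwards [k1, k2] with u hu1 hu2
  have hs : (2:ℝ)*h1 ≠ 0 := mul_ne_zero two_ne_zero hh1
  refine Step3.eq_dirac_of_exp (2*h1) hs u (κ u) ?_ ?_
  · have he : ∀ x : ℝ, (2*h1)*x = (h1 - -h1)*x := fun x => by ring
    simp_rw [he]; exact hu2
  · have he : ∀ x : ℝ, -((2*h1)*x) = (-h1 - h1)*x := fun x => by ring
    simp_rw [he]; exact hu1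
end
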